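/- Let K be a field and p, q integers with p, q ≥ 2. Let M be a p×q matrix over K of rank 1 such that rank(E_{11} + M) ≤ 1 and rank(E_{22} + M) ≤ 1. Then there exists a scalar c ∈ K such that M = c·E_{12} or M = c·E_{21}. -/

import Mathlib

set_option maxHeartbeats 1000000

/-- Any `2×2` minor of a matrix of rank at most one vanishes. -/
lemma minor_eq_of_rank_le_one {K : Type*} [Field K] {p q : ℕ}
    (N : Matrix (Fin p) (Fin q) K) (h : N.rank ≤ 1)
    (i j : Fin p) (k l : Fin q) : N i k * N j l = N i l * N j k := by
  have hW : Module.finrank K ↥(LinearMap.range N.mulVecLin) ≤ 1 := h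
  obtain ⟨v, hv⟩ := finrank_le_one_iff.mp hW
  have hk : (fun i => N i k) ∈ LinearMap.range N.mulVecLin :=
    ⟨Pi.single k 1, by simp [Matrix.mulVecLin_apply]; rfl⟩
  have hl : (fun i => N i l) ∈ LinearMap.range N.mulVecLin :=
    ⟨Pi.single l 1, by simp [Matrix.mulVecLin_apply]; rfl⟩
  obtain ⟨a, ha⟩ := hv ⟨_, hk⟩
  obtain ⟨b, hb⟩ := hv ⟨_, hl⟩
  have ha' : a • (v : Fin p → K) = fun i => N i k := congrArg Subtype.val ha
  have hb' : b • (v : Fin p → K) = fun i => N i l := congrArg Subtype.val hb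
  have hik : N i k = a * (v : Fin p → K) i := (congrFun ha' i).symm
  have hjk : N j k = a * (v : Fin p → K) j := (congrFun ha' j).symm
  have hil : N i l = b * (v : Fin p → K) i := (congrFun hb' i).symm
  have hjl : N j l = b * (v : Fin p → K) j := (congrFun hb' j).symm
  rw [hik, hjk, hil, hjl]; ring

lemma aux_rank_one_smul {K : Type*} [Field K] {p q : ℕ}
    (i0 i1 : Fin p) (j0 j1 : Fin q) (hii : i0 ≠ i1) (hjj : j0 ≠ j1)
    (M : Matrix (Fin p) (Fin q) K) (hM : M.rank = 1)
    (h11 : (Matrix.single i0 j0 (1 : K) + M).rank ≤ 1)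
    (h22 : (Matrix.single i1 j1 (1 : K) + M).rank ≤ 1) :
    ∃ c : K, M = c • Matrix.single i0 j1 (1 : K)
      ∨ M = c • Matrix.single i1 j0 (1 : K) := by
  have hMle : M.rank ≤ 1 := hM.le
  -- entries with row index ≠ i0 and column index ≠ j0 vanish
  have hz1 : ∀ i j, i ≠ i0 → j ≠ j0 → M i j = 0 := by
    intro i j hi hj
    have hA := minor_eq_of_rank_le_one _ h11 i0 i j0 j
    have hMm := minor_eq_of_rank_le_one _ hMle i0 i j0 j
    simp only [Matrix.add_apply, Matrix.single, Matrix.of_apply,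
      (Ne.symm hi), (Ne.symm hj), and_self, and_false, false_and, if_true, if_false,
      if_pos (And.intro rfl rfl)] at hA
    linear_combination hA - hMm
  -- entries with row index ≠ i1 and column index ≠ j1 vanish
  have hz2 : ∀ i j, i ≠ i1 → j ≠ j1 → M i j = 0 := by
    intro i j hi hj
    have hA := minor_eq_of_rank_le_one _ h22 i1 i j1 j
    have hMm := minor_eq_of_rank_le_one _ hMle i1 i j1 j
    simp only [Matrix.add_apply, Matrix.single, Matrix.of_apply,
      (Ne.symm hi), (Ne.symm hj), and_self, and_false, false_and, if_true, if_false,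
      if_pos (And.intro rfl rfl)] at hA
    linear_combination hA - hMm
  have h00 : M i0 j0 = 0 := hz2 _ _ hii hjj
  have h11' : M i1 j1 = 0 := hz1 _ _ hii.symm hjj.symm
  -- the remaining minor forces one of the two off-diagonal entries to vanish
  have hprod : M i0 j1 * M i1 j0 = 0 := by
    have := minor_eq_of_rank_le_one _ hMle i0 i1 j0 j1
    rw [h00, h11'] at this
    linear_combination -this
  -- every entry outside {(i0,j1), (i1,j0)} vanishes
  have hzero : ∀ i j, ¬(i = i0 ∧ j = j1) → ¬(i = i1 ∧ j = j0) → M i j = 0 := by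
    intro i j h1 h2
    by_cases hi : i = i0
    · by_cases hj : j = j0
      · rw [hi, hj]; exact h00
      · exact hz2 i j (by rw [hi]; exact hii) (fun hc => h1 ⟨hi, hc⟩)
    · by_cases hj : j = j0
      · exact hz2 i j (fun hc => h2 ⟨hc, hj⟩) (by rw [hj]; exact hjj)
      · exact hz1 i j hi hj
  rcases mul_eq_zero.mp hprod with h01 | h10
  · -- M i0 j1 = 0, so M = (M i1 j0) • E₂₁
    refine ⟨M i1 j0, Or.inr ?_⟩
    ext i j
    simp only [Matrix.smul_apply, Matrix.single, Matrix.of_apply, smul_eq_mul]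
    by_cases h : i1 = i ∧ j0 = j
    · rw [if_pos h, mul_one, ← h.1, ← h.2]
    · rw [if_neg h, mul_zero]
      by_cases h' : i = i0 ∧ j = j1
      · rw [h'.1, h'.2]; exact h01
      · exact hzero i j h' (fun hc => h ⟨hc.1.symm, hc.2.symm⟩)
  · -- M i1 j0 = 0, so M = (M i0 j1) • E₁₂
    refine ⟨M i0 j1, Or.inl ?_⟩
    ext i j
    simp only [Matrix.smul_apply, Matrix.single, Matrix.of_apply, smul_eq_mul]
    by_cases h : i0 = i ∧ j1 = j
    · rw [if_pos h, mul_one, ← h.1, ← h.2]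
    · rw [if_neg h, mul_zero]
      by_cases h' : i = i1 ∧ j = j0
      · rw [h'.1, h'.2]; exact h10
      · exact hzero i j (fun hc => h ⟨hc.1.symm, hc.2.symm⟩) h'

theorem rank_one_matrix_eq_smul_stdBasis_of_rank_add_le_one
    {K : Type*} [Field K] (p q : ℕ) (hp : 2 ≤ p) (hq : 2 ≤ q)
    (M : Matrix (Fin p) (Fin q) K) (hM : M.rank = 1)
    (h11 : (Matrix.single (⟨0, by omega⟩ : Fin p) (⟨0, by omega⟩ : Fin q) (1 : K)
        + M).rank ≤ 1)
    (h22 : (Matrix.single (⟨1, by omega⟩ : Fin p) (⟨1, by omega⟩ : Fin q) (1 : K)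
        + M).rank ≤ 1) :
    ∃ c : K,
      M = c • Matrix.single (⟨0, by omega⟩ : Fin p) (⟨1, by omega⟩ : Fin q) (1 : K)
      ∨ M = c • Matrix.single (⟨1, by omega⟩ : Fin p) (⟨0, by omega⟩ : Fin q) (1 : K) := by
  exact aux_rank_one_smul _ _ _ _ (by simp [Fin.ext_iff]) (by simp [Fin.ext_iff]) M hM h11 h22
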